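/- For any rational function f without poles on the set of points with x = y, the function (f - τ·f)/(x - y) also has no poles on that set, and equals 2·D(f), where D = ½(∂/∂x − ∂/∂y) and τ swaps the variables x and y. -/

import Mathlib

open MvPolynomial

private lemma dvd_sub_subst {N : ℕ} (p q : Fin N) (g : MvPolynomial (Fin N) ℂ) :
    (X p - X q : MvPolynomial (Fin N) ℂ) ∣
      g - bind₁ (fun i => if i = p then (X q : MvPolynomial (Fin N) ℂ) else X i) g := by
  induction g using MvPolynomial.induction_on with
  | C a => simp
  | add f g hf hg =>
      have : f + g - bind₁ (fun i => if i = p then (X q : MvPolynomial (Fin N) ℂ) else X i) (f + g)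
          = (f - bind₁ (fun i => if i = p then (X q : MvPolynomial (Fin N) ℂ) else X i) f)
            + (g - bind₁ (fun i => if i = p then (X q : MvPolynomial (Fin N) ℂ) else X i) g) := by
        rw [map_add]; ring
      rw [this]; exact dvd_add hf hg
  | mul_X f i hf =>
      have : f * X i - bind₁ (fun i => if i = p then (X q : MvPolynomial (Fin N) ℂ) else X i) (f * X i)
          = (f - bind₁ (fun i => if i = p then (X q : MvPolynomial (Fin N) ℂ) else X i) f) * X i
            + bind₁ (fun i => if i = p then (X q : MvPolynomial (Fin N) ℂ) else X i) f
              * (X i - bind₁ (fun i => if i = p then (X q : MvPolynomial (Fin N) ℂ) else X i) (X i)) := by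
        rw [map_mul]; ring
      rw [this]
      refine dvd_add (Dvd.dvd.mul_right hf _) (Dvd.dvd.mul_left ?_ _)
      by_cases h : i = p
      · subst h; simp
      · simp [h]

/-- For a rational function `f = P/Q` without poles on the locus `x = y`
(`x`, `y` being the `p`-th and `q`-th variables), the function
`(f - τ·f)/(x - y)` also has no poles on that locus (it admits a representation
`P'/Q'` with `Q'` nonvanishing on `x = y`), and on that locus its value equals
`2·D(f)` where `D = ½(∂/∂x − ∂/∂y)` and `τ` swaps `x` and `y`. -/
theorem stmt3 (N : ℕ) (p q : Fin N) (hpq : p ≠ q)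
    (P Q : MvPolynomial (Fin N) ℂ)
    (hQ : ∀ v : Fin N → ℂ, v p = v q → eval v Q ≠ 0) :
    ∃ P' Q' : MvPolynomial (Fin N) ℂ,
      (∀ v : Fin N → ℂ, v p = v q → eval v Q' ≠ 0) ∧
      (∀ v : Fin N → ℂ, v p ≠ v q → eval v Q ≠ 0 →
        eval v (rename (Equiv.swap p q) Q) ≠ 0 →
        (eval v P / eval v Q -
            eval (v ∘ Equiv.swap p q) P / eval (v ∘ Equiv.swap p q) Q) / (v p - v q)
          = eval v P' / eval v Q') ∧
      (∀ v : Fin N → ℂ, v p = v q →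
        eval v P' / eval v Q' =
          2 * eval v
              ((1/2 : ℂ) • (pderiv p P - pderiv q P) * Q -
                P * ((1/2 : ℂ) • (pderiv p Q - pderiv q Q))) /
            (eval v Q) ^ 2) := by
  classical
  set τ : MvPolynomial (Fin N) ℂ →ₐ[ℂ] MvPolynomial (Fin N) ℂ :=
    rename (R := ℂ) (Equiv.swap p q) with hτ
  set g : MvPolynomial (Fin N) ℂ := P * τ Q - τ P * Q with hg
  have eval_τ : ∀ (v : Fin N → ℂ) (R : MvPolynomial (Fin N) ℂ),
      eval v (τ R) = eval (v ∘ Equiv.swap p q) R := by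
    intro v R; rw [hτ]; exact eval_rename (k := Equiv.swap p q) v R
  have eval_diag : ∀ (v : Fin N → ℂ), v p = v q → ∀ R : MvPolynomial (Fin N) ℂ,
      eval v (τ R) = eval v R := by
    intro v hv R
    rw [eval_τ]
    have : v ∘ Equiv.swap p q = v := by
      funext i
      by_cases h : i = p
      · simp [h, hv]
      · by_cases h' : i = q
        · simp [h', hv]
        · simp [Function.comp, Equiv.swap_apply_of_ne_of_ne h h']
    rw [this]
  have hsub : bind₁ (fun i => if i = p then (X q : MvPolynomial (Fin N) ℂ) else X i) g = 0 := by
    apply MvPolynomial.funext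
    intro v
    have : eval v (bind₁ (fun i => if i = p then (X q : MvPolynomial (Fin N) ℂ) else X i) g)
        = eval (fun i => if i = p then v q else v i) g := by
      show eval₂Hom (RingHom.id ℂ) v _ = _
      rw [eval₂Hom_bind₁]
      exact eval₂Hom_congr rfl (by funext i; by_cases h : i = p <;> simp [h]) rfl
    rw [this]
    set w : Fin N → ℂ := fun i => if i = p then v q else v i with hw
    have hwp : w p = w q := by simp [hw, Ne.symm hpq]
    simp only [hg, map_sub, map_mul, eval_diag w hwp]
    ring_nf
    simp
  have hdvd : (X p - X q : MvPolynomial (Fin N) ℂ) ∣ g := by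
    have := dvd_sub_subst p q g
    rwa [hsub, sub_zero] at this
  obtain ⟨P', hP'⟩ := hdvd
  refine ⟨P', Q * τ Q, ?_, ?_, ?_⟩
  · intro v hv
    rw [map_mul, eval_diag v hv]
    exact mul_ne_zero (hQ v hv) (hQ v hv)
  · intro v hv hQ1 hQ2
    rw [eval_τ] at hQ2
    have hgv : eval v P * eval (v ∘ Equiv.swap p q) Q - eval (v ∘ Equiv.swap p q) P * eval v Q
        = (v p - v q) * eval v P' := by
      have h1 := congrArg (eval v) hP'
      simp only [hg, map_sub, map_mul, eval_τ, eval_X] at h1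
      convert h1 using 2
    have hv' : (v p - v q : ℂ) ≠ 0 := sub_ne_zero.mpr hv
    rw [map_mul, eval_τ]
    field_simp
    linear_combination hgv
  · intro v hv
    have hQv := hQ v hv
    have hτp : ∀ R : MvPolynomial (Fin N) ℂ, pderiv p (τ R) = τ (pderiv q R) := by
      intro R
      rw [hτ]
      have := pderiv_rename (Equiv.injective (Equiv.swap p q)) q R
      rwa [Equiv.swap_apply_right] at this
    have hP'v : eval v P' = eval v (pderiv p g) := by
      rw [hP', pderiv_mul]
      simp [hv, Ne.symm hpq, pderiv_X, hpq]
    have hgder : eval v (pderiv p g) =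
        (eval v (pderiv p P) - eval v (pderiv q P)) * eval v Q
          - eval v P * (eval v (pderiv p Q) - eval v (pderiv q Q)) := by
      simp only [hg, map_sub, pderiv_mul, hτp, map_add, map_mul, eval_diag v hv]
      ring
    rw [map_mul, eval_diag v hv, hP'v, hgder]
    have : eval v ((1/2 : ℂ) • (pderiv p P - pderiv q P) * Q -
        P * ((1/2 : ℂ) • (pderiv p Q - pderiv q Q)))
        = (1/2 : ℂ) * ((eval v (pderiv p P) - eval v (pderiv q P)) * eval v Q
            - eval v P * (eval v (pderiv p Q) - eval v (pderiv q Q))) := by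
      simp [smul_eq_C_mul, map_sub, map_mul]
      ring
    rw [this, sq]
    ring
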